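/- arXiv:1508.01068 — 3 statements merged into one kernel-verified Lean document; each statement's English description precedes it below -/
import Mathlib

section
/- Let δ, γ be nonzero ordinals, τ an ordinal, and Σ = ⟨S_β : β < τ⟩ a partition of δ*. For any two basic sets B₁, B₂ of ⟨L^{δ,γ}, I^{Σ,γ}⟩, either B₁ ⊆ B₂, or B₂ ⊆ B₁, or B₁ ∩ B₂ = ∅. -/
open Ordinal Cardinal

abbrev SOrd : Type 1 := Ordinalᵒᵈ ⊕ₗ Ordinal

namespace SOrd
def neg (α : Ordinal) : SOrd := toLex (Sum.inl (OrderDual.toDual α))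
def pos (α : Ordinal) : SOrd := toLex (Sum.inr α)
def IsPos (a : SOrd) : Prop := ∃ α : Ordinal, a = pos α
def val (a : SOrd) : Ordinal := Sum.elim (fun b => OrderDual.ofDual b) id (ofLex a)
end SOrd

def IsBetween (δ : Ordinal) (a : SOrd) : Prop := SOrd.neg δ < a ∧ a < SOrd.pos δ

def Lset (δ γ : Ordinal) : Set (List SOrd) :=
  {x | x ≠ [] ∧ (∃ h : 0 < x.length, ∃ α < γ, x[0]'h = SOrd.pos α) ∧
    ∀ k, ∀ h : k < x.length, 0 < k → IsBetween δ (x[k]'h)}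

def Llt (x y : List SOrd) : Prop :=
  (∃ k, ∃ hx : k < x.length, ∃ hy : k < y.length,
      x.take k = y.take k ∧ x[k]'hx < y[k]'hy) ∨
  (∃ hy : x.length < y.length, y.take x.length = x ∧ SOrd.IsPos (y[x.length]'hy)) ∨
  (∃ hx : y.length < x.length, x.take y.length = y ∧ ¬ SOrd.IsPos (x[y.length]'hx))

/-- `S` (as the indexed family `⟨S β : β < τ⟩`, where each `ξ ∈ S β` codes the
negative ordinal `ξ*`) is a partition of `δ*`. -/
def IsPartition (δ τ : Ordinal) (S : Ordinal → Set Ordinal) : Prop :=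
  (∀ β, S β ⊆ Set.Iio δ) ∧ (∀ β, τ ≤ β → S β = ∅) ∧ (∀ ξ, ξ < δ → ∃! β, ξ ∈ S β)

/-- `β^Σ(ξ*)`: the index of the piece of the partition containing `ξ*`. -/
noncomputable def colorOf (S : Ordinal → Set Ordinal) (ξ : Ordinal) : Ordinal :=
  sInf {β | ξ ∈ S β}

/-- The index set `r_x`. -/
def rIdx (τ : Ordinal) (x : List SOrd) : Set ℕ :=
  {i | ∃ h : i < x.length, 2 ≤ i ∧ i % 2 = 0 ∧ x[i]'h < SOrd.pos τ}

/-- `Σ`-relevant sequences. -/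
def Relevant (δ γ τ : Ordinal) (S : Ordinal → Set Ordinal) (x : List SOrd) : Prop :=
  x ∈ Lset δ γ ∧ 3 ≤ x.length ∧ x.length % 2 = 1 ∧
  (∀ i, ∀ h : i < x.length, (SOrd.IsPos (x[i]'h) ↔ i % 2 = 0)) ∧
  (∀ i ∈ rIdx τ x, ∀ j ∈ rIdx τ x, i < j →
    ∀ (hi : i - 1 < x.length) (hj : j - 1 < x.length),
      colorOf S (x[j-1]'hj).val < colorOf S (x[i-1]'hi).val) ∧
  x.length - 1 ∈ rIdx τ x

/-- `J^{Σ,γ}_x = {z ∈ L^{δ,γ} : x↾(|x|-1) ≤ z < x}`. -/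
def Jset (δ γ : Ordinal) (x : List SOrd) : Set (List SOrd) :=
  {z ∈ Lset δ γ | (z = x.take (x.length - 1) ∨ Llt (x.take (x.length - 1)) z) ∧ Llt z x}

/-- The initial segment `L^{δ,γ}_α = {z : z < ⟨α⟩}` (equal to `L^{δ,γ}` when `α = γ`). -/
def Lbelow (δ γ α : Ordinal) : Set (List SOrd) :=
  {z ∈ Lset δ γ | Llt z [SOrd.pos α]}

/-- `L^{δ,γ}_x = {z ∈ L^{δ,γ} : z < x}`. -/
def Lx (δ γ : Ordinal) (x : List SOrd) : Set (List SOrd) :=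
  {z ∈ Lset δ γ | Llt z x}

/-- The basic sets of `I^{Σ,γ}`. -/
def IsBasic (δ γ τ : Ordinal) (S : Ordinal → Set Ordinal) (B : Set (List SOrd)) : Prop :=
  (∃ α ≤ γ, B = Lbelow δ γ α) ∨
  (∃ x, Relevant δ γ τ S x ∧ B = Jset δ γ x) ∨
  (∃ z ∈ Lset δ γ, B = ({z} : Set (List SOrd)))

/-- `I^{Σ,γ}`: finite unions of basic sets. -/
def Ifam (δ γ τ : Ordinal) (S : Ordinal → Set Ordinal) : Set (Set (List SOrd)) :=
  {A | ∃ E : Finset (Set (List SOrd)), (∀ B ∈ E, IsBasic δ γ τ S B) ∧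
    A = ⋃ B ∈ E, (B : Set (List SOrd))}

/-- `I^{Σ,γ}_x = {A ⊆ L^{δ,γ}_x : A ∈ I^{Σ,γ}}`. -/
def Ix (δ γ τ : Ordinal) (S : Ordinal → Set Ordinal) (x : List SOrd) : Set (Set (List SOrd)) :=
  {A | A ⊆ Lx δ γ x ∧ A ∈ Ifam δ γ τ S}

set_option linter.unusedVariables false
section BasicAux
abbrev T : Type 1 := Ordinalᵒᵈ ⊕ₗ WithBot Ordinal
def marker : T := toLex (Sum.inr ⊥)
def f (a : SOrd) : T :=
  match (ofLex a : Ordinalᵒᵈ ⊕ Ordinal) with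
  | .inl ξ => toLex (Sum.inl ξ)
  | .inr β => toLex (Sum.inr (β : WithBot Ordinal))

def seqL (x : List SOrd) : ℕ → T := fun i => if h : i < x.length then f (x[i]) else marker
lemma seqL_pos {x : List SOrd} {i : ℕ} (h : i < x.length) : seqL x i = f (x[i]) := dif_pos h
lemma seqL_neg {x : List SOrd} {i : ℕ} (h : ¬ i < x.length) : seqL x i = marker := dif_neg h

set_option linter.unreachableTactic false
set_option linter.unusedTactic false


lemma sord_cases (a : SOrd) : (∃ ξ : Ordinalᵒᵈ, a = toLex (Sum.inl ξ)) ∨ ∃ β, a = SOrd.pos β := by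
  obtain ⟨a, rfl⟩ : ∃ s : Ordinalᵒᵈ ⊕ Ordinal, toLex s = a := ⟨ofLex a, rfl⟩
  cases a with
  | inl ξ => exact Or.inl ⟨ξ, rfl⟩
  | inr β => exact Or.inr ⟨β, rfl⟩

lemma isPos_pos (β : Ordinal) : SOrd.IsPos (SOrd.pos β) := ⟨β, rfl⟩

lemma not_isPos_inl (ξ : Ordinalᵒᵈ) : ¬ SOrd.IsPos (toLex (Sum.inl ξ)) := by
  rintro ⟨β, h⟩
  have := congrArg ofLex h
  simp [SOrd.pos] at this

lemma f_inl (ξ : Ordinalᵒᵈ) : f (toLex (Sum.inl ξ)) = toLex (Sum.inl ξ) := rfl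
lemma f_pos (β : Ordinal) : f (SOrd.pos β) = toLex (Sum.inr (β : WithBot Ordinal)) := rfl
lemma f_inr (β : Ordinal) : f (toLex (Sum.inr β)) = toLex (Sum.inr (β : WithBot Ordinal)) := rfl

lemma f_lt_iff {a b : SOrd} : f a < f b ↔ a < b := by
  rcases sord_cases a with ⟨ξ, rfl⟩ | ⟨β, rfl⟩ <;> rcases sord_cases b with ⟨ζ, rfl⟩ | ⟨η, rfl⟩ <;>
    simp [f_inl, f_pos, f_inr, SOrd.pos, Sum.Lex.toLex_lt_toLex, Sum.lex_inl_inl, Sum.lex_inr_inr,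
      Sum.lex_inr_inl, Sum.Lex.sep, WithBot.coe_lt_coe, Sum.Lex.inl_le_inr, Sum.Lex.inl_lt_inr]

lemma f_inj {a b : SOrd} (h : f a = f b) : a = b := by
  rcases lt_trichotomy a b with h' | h' | h'
  · exact absurd (f_lt_iff.2 h') (by simp [h])
  · exact h'
  · exact absurd (f_lt_iff.2 h') (by simp [h])

lemma f_ne_marker (a : SOrd) : f a ≠ marker := by
  rcases sord_cases a with ⟨ξ, rfl⟩ | ⟨β, rfl⟩ <;>
      simp [f_inl, f_pos, f_inr, marker] <;> intro h <;> exact absurd (congrArg ofLex h) (by simp)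

lemma f_lt_marker {a : SOrd} : f a < marker ↔ ¬ SOrd.IsPos a := by
  rcases sord_cases a with ⟨ξ, rfl⟩ | ⟨β, rfl⟩ <;>
    simp [f_inl, f_pos, f_inr, marker, Sum.Lex.toLex_lt_toLex, Sum.lex_inr_inr, Sum.lex_inr_inl,
      not_isPos_inl, isPos_pos, Sum.Lex.sep]

lemma marker_lt_f {a : SOrd} : marker < f a ↔ SOrd.IsPos a := by
  rcases sord_cases a with ⟨ξ, rfl⟩ | ⟨β, rfl⟩ <;>
    simp [f_inl, f_pos, f_inr, marker, Sum.Lex.toLex_lt_toLex, Sum.lex_inr_inr, Sum.lex_inr_inl,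
      not_isPos_inl, isPos_pos, WithBot.bot_lt_coe]

section
variable {T : Type*} [LinearOrder T]
def SeqLt (s t : ℕ → T) : Prop := ∃ i, (∀ j < i, s j = t j) ∧ s i < t i

lemma seqLt_irrefl (s : ℕ → T) : ¬ SeqLt s s := by
  rintro ⟨i, -, h⟩; exact lt_irrefl _ h

lemma seqLt_trans {a b c : ℕ → T} (h1 : SeqLt a b) (h2 : SeqLt b c) : SeqLt a c := by
  obtain ⟨i, hi, hlt⟩ := h1
  obtain ⟨i', hi', hlt'⟩ := h2
  rcases lt_trichotomy i i' with h | rfl | h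
  · exact ⟨i, fun j hj => (hi j hj).trans (hi' j (hj.trans h)), hlt.trans_le (hi' i h).le⟩
  · exact ⟨i, fun j hj => (hi j hj).trans (hi' j hj), hlt.trans hlt'⟩
  · exact ⟨i', fun j hj => (hi j (hj.trans h)).trans (hi' j hj), ((hi i' h).symm ▸ hlt').trans_le le_rfl⟩

lemma seqLt_asymm {a b : ℕ → T} (h1 : SeqLt a b) (h2 : SeqLt b a) : False :=
  seqLt_irrefl a (seqLt_trans h1 h2)

lemma seqLt_total {a b : ℕ → T} (h : a ≠ b) : SeqLt a b ∨ SeqLt b a := by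
  have hex : ∃ i, a i ≠ b i := by
    by_contra hc
    push_neg at hc
    exact h (funext hc)
  classical
  let i := Nat.find hex
  have hne : a i ≠ b i := Nat.find_spec hex
  have heq : ∀ j < i, a j = b j := fun j hj => by
    by_contra hc
    exact absurd (Nat.find_le hc) (not_le.2 hj)
  rcases hne.lt_or_gt with h' | h'
  · exact Or.inl ⟨i, heq, h'⟩
  · exact Or.inr ⟨i, fun j hj => (heq j hj).symm, h'⟩

/-- sandwich: if a ≤ z < b and a, b agree below m, then z agrees with a below m. -/
lemma seqLt_sandwich {a z b : ℕ → T} (h1 : a = z ∨ SeqLt a z) (h2 : SeqLt z b)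
    (hab : ∀ j < m, a j = b j) : ∀ k < m, z k = a k := by
  rcases h1 with rfl | ⟨i, hi, hlt⟩
  · exact fun k _ => rfl
  intro k hk
  induction k using Nat.strong_induction_on with
  | _ k IH =>
  have IH' : ∀ j < k, j < m → z j = a j := fun j hj hjm => IH j hj hjm
  rcases lt_trichotomy i k with h' | heqik | h'
  · exact absurd (IH' i h' (h'.trans hk)) (fun he => absurd he.symm hlt.ne)
  · -- i = k : a k < z k, derive contradiction with z < b
    have hlt : a k < z k := heqik ▸ hlt
    obtain ⟨i', hi', hlt'⟩ := h2
    exfalso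
    rcases lt_trichotomy i' k with h'' | heq2 | h''
    · have : z i' = a i' := IH' i' h'' (h''.trans hk)
      rw [this, hab i' (h''.trans hk)] at hlt'
      exact lt_irrefl _ hlt'
    · have hlt' : z k < b k := heq2 ▸ hlt'
      rw [← hab k hk] at hlt'
      exact lt_irrefl _ (hlt.trans hlt')
    · have := hi' k h''
      rw [this, hab k hk] at hlt
      exact lt_irrefl _ hlt
  · exact (hi k h').symm
end

section
variable {α : Type*}
lemma take_eq' {x y : List α} {k : ℕ} (hkx : k ≤ x.length) (hky : k ≤ y.length)
    (h : ∀ j (hj : j < k), x[j]'(lt_of_lt_of_le hj hkx) = y[j]'(lt_of_lt_of_le hj hky)) :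
    x.take k = y.take k := by
  apply List.ext_getElem (by simp [hkx, hky])
  intro j h1 h2
  have hj : j < k := by simpa [hkx] using h1
  rw [List.getElem_take, List.getElem_take]
  exact h j hj

lemma getElem_eq_of_take_eq {x y : List α} {k j : ℕ} (h : x.take k = y.take k) (hj : j < k)
    (hjx : j < x.length) (hjy : j < y.length) : x[j] = y[j] := by
  have h1 : j < (x.take k).length := by simp; omega
  have h2 : j < (y.take k).length := by simp; omega
  calc x[j] = (x.take k)[j]'h1 := (List.getElem_take).symm
    _ = (y.take k)[j]'h2 := by congr 1
    _ = y[j] := List.getElem_take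

end

lemma llt_iff {x y : List SOrd} : Llt x y ↔ SeqLt (seqL x) (seqL y) := by
  constructor
  · rintro (⟨k, hkx, hky, hteq, hlt⟩ | ⟨hy, hteq, hpos⟩ | ⟨hx, hteq, hpos⟩)
    · refine ⟨k, fun j hj => ?_, ?_⟩
      · rw [seqL_pos (hj.trans hkx), seqL_pos (hj.trans hky),
          getElem_eq_of_take_eq hteq hj (hj.trans hkx) (hj.trans hky)]
      · rw [seqL_pos hkx, seqL_pos hky]
        exact f_lt_iff.2 hlt
    · refine ⟨x.length, fun j hj => ?_, ?_⟩
      · rw [seqL_pos hj, seqL_pos (hj.trans hy)]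
        congr 1
        calc x[j] = (y.take x.length)[j]'(by simp [hy.le]; exact hj) := by
              congr 1; exact hteq.symm
          _ = y[j]'(hj.trans hy) := List.getElem_take
      · rw [seqL_neg (lt_irrefl _), seqL_pos hy]
        exact marker_lt_f.2 hpos
    · refine ⟨y.length, fun j hj => ?_, ?_⟩
      · rw [seqL_pos hj, seqL_pos (hj.trans hx)]
        congr 1
        calc x[j]'(hj.trans hx) = (x.take y.length)[j]'(by simp [hx.le]; exact hj) :=
              (List.getElem_take).symm
          _ = y[j] := by congr 1
      · rw [seqL_neg (lt_irrefl _), seqL_pos hx]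
        exact f_lt_marker.2 hpos
  · rintro ⟨i, hagree, hlt⟩
    by_cases hxi : i < x.length <;> by_cases hyi : i < y.length
    · refine Or.inl ⟨i, hxi, hyi, ?_, ?_⟩
      · refine take_eq' hxi.le hyi.le fun j hj => ?_
        have := hagree j hj
        rw [seqL_pos (hj.trans hxi), seqL_pos (hj.trans hyi)] at this
        exact f_inj this
      · have := hlt
        rw [seqL_pos hxi, seqL_pos hyi] at this
        exact f_lt_iff.1 this
    · -- i ≥ y.length: clause (iii), i = y.length
      have hylei : y.length ≤ i := not_lt.1 hyi
      have hiy : i = y.length := by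
        rcases hylei.lt_or_eq with h' | h'
        · exfalso
          have := hagree y.length h'
          rw [seqL_neg (lt_irrefl _), seqL_pos (h'.trans hxi)] at this
          exact f_ne_marker _ this
        · exact h'.symm
      subst hiy
      refine Or.inr (Or.inr ⟨hxi, ?_, ?_⟩)
      · have heq : x.take y.length = y.take y.length := by
          refine take_eq' hxi.le le_rfl fun j hj => ?_
          have := hagree j hj
          rw [seqL_pos (hj.trans hxi), seqL_pos hj] at this
          exact f_inj this
        simpa using heq
      · rw [seqL_pos hxi, seqL_neg (lt_irrefl _)] at hlt
        exact f_lt_marker.1 hlt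
    · have hxlei : x.length ≤ i := not_lt.1 hxi
      have hix : i = x.length := by
        rcases hxlei.lt_or_eq with h' | h'
        · exfalso
          have := hagree x.length h'
          rw [seqL_neg (lt_irrefl _), seqL_pos (h'.trans hyi)] at this
          exact f_ne_marker _ this.symm
        · exact h'.symm
      subst hix
      refine Or.inr (Or.inl ⟨hyi, ?_, ?_⟩)
      · have heq : y.take x.length = x.take x.length := by
          refine take_eq' hyi.le le_rfl fun j hj => ?_
          have := hagree j hj
          rw [seqL_pos hj, seqL_pos (hj.trans hyi)] at this
          exact (f_inj this).symm
        simpa using heq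
      · rw [seqL_neg (lt_irrefl _), seqL_pos hyi] at hlt
        exact marker_lt_f.1 hlt
    · exfalso
      rw [seqL_neg hxi, seqL_neg hyi] at hlt
      exact lt_irrefl _ hlt

lemma seqL_inj {x y : List SOrd} (h : seqL x = seqL y) : x = y := by
  have h' : ∀ i, seqL x i = seqL y i := fun i => congrFun h i
  have hlen : x.length = y.length := by
    rcases lt_trichotomy x.length y.length with h'' | h'' | h''
    · exfalso
      have := h' x.length
      rw [seqL_neg (lt_irrefl _), seqL_pos h''] at this
      exact f_ne_marker _ this.symm
    · exact h''
    · exfalso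
      have := h' y.length
      rw [seqL_neg (lt_irrefl _), seqL_pos h''] at this
      exact f_ne_marker _ this
  refine List.ext_getElem hlen fun i h1 h2 => ?_
  have := h' i
  rw [seqL_pos h1, seqL_pos h2] at this
  exact f_inj this

lemma llt_trans {x y z : List SOrd} (h1 : Llt x y) (h2 : Llt y z) : Llt x z :=
  llt_iff.2 (seqLt_trans (llt_iff.1 h1) (llt_iff.1 h2))
lemma llt_irrefl (x : List SOrd) : ¬ Llt x x := fun h => seqLt_irrefl _ (llt_iff.1 h)
lemma llt_asymm {x y : List SOrd} (h1 : Llt x y) (h2 : Llt y x) : False :=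
  seqLt_asymm (llt_iff.1 h1) (llt_iff.1 h2)
lemma llt_total {x y : List SOrd} (h : x ≠ y) : Llt x y ∨ Llt y x := by
  have : seqL x ≠ seqL y := fun hc => h (seqL_inj hc)
  rcases seqLt_total this with h' | h'
  · exact Or.inl (llt_iff.2 h')
  · exact Or.inr (llt_iff.2 h')

-- clause helpers
lemma pos_lt_pos {α β : Ordinal} : SOrd.pos α < SOrd.pos β ↔ α < β := by
  simp [SOrd.pos, Sum.Lex.toLex_lt_toLex, Sum.lex_inr_inr]

lemma llt_at {x y : List SOrd} {k : ℕ} (hkx : k < x.length) (hky : k < y.length)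
    (hteq : x.take k = y.take k) (hlt : x[k]'hkx < y[k]'hky) : Llt x y :=
  Or.inl ⟨k, hkx, hky, hteq, hlt⟩

lemma llt_prefix_pos {w : List SOrd} {k : ℕ} (hk : k < w.length) (u : List SOrd)
    (hu : u = w.take k) (hpos : SOrd.IsPos (w[k]'hk)) : Llt u w := by
  subst hu
  have hl : (w.take k).length = k := by simp [hk.le]
  refine Or.inr (Or.inl ?_)
  simp only [hl]
  exact ⟨hk, trivial, hpos⟩

lemma llt_prefix_neg {w : List SOrd} {k : ℕ} (hk : k < w.length) (u : List SOrd)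
    (hu : u = w.take k) (hneg : ¬ SOrd.IsPos (w[k]'hk)) : Llt w u := by
  subst hu
  have hl : (w.take k).length = k := by simp [hk.le]
  refine Or.inr (Or.inr ?_)
  simp only [hl]
  exact ⟨hk, trivial, hneg⟩

lemma jset_prefix {δ γ τ : Ordinal} {S : Ordinal → Set Ordinal} {x : List SOrd}
    (hx : Relevant δ γ τ S x) {z : List SOrd} (hz : z ∈ Jset δ γ x) :
    ∃ hlen : x.length - 1 ≤ z.length,
      ∀ j (hj : j < x.length - 1), z[j]'(lt_of_lt_of_le hj hlen) = x[j]'(by omega) := by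
  set m := x.length - 1 with hm
  have hmlt : m < x.length := by have := hx.2.1; omega
  obtain ⟨hzL, hzlo, hzhi⟩ := hz
  -- sandwich on sequences
  have h1 : seqL (x.take m) = seqL z ∨ SeqLt (seqL (x.take m)) (seqL z) := by
    rcases hzlo with h | h
    · exact Or.inl (congrArg seqL h.symm)
    · exact Or.inr (llt_iff.1 h)
  have h2 : SeqLt (seqL z) (seqL x) := llt_iff.1 hzhi
  have hab : ∀ j < m, seqL (x.take m) j = seqL x j := by
    intro j hj
    have hjt : j < (x.take m).length := by simp [hmlt.le]; exact hj
    rw [seqL_pos hjt, seqL_pos (hj.trans hmlt)]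
    congr 1
    exact List.getElem_take
  have hzk : ∀ k < m, seqL z k = seqL (x.take m) k := seqLt_sandwich h1 h2 hab
  have hlen : m ≤ z.length := by
    by_contra hc
    push_neg at hc
    have := hzk z.length hc
    rw [seqL_neg (lt_irrefl _)] at this
    have hjt : z.length < (x.take m).length := by simp [hmlt.le]; exact hc
    rw [seqL_pos hjt] at this
    exact f_ne_marker _ this.symm
  refine ⟨hlen, fun j hj => ?_⟩
  have := hzk j hj
  have hjt : j < (x.take m).length := by simp [hmlt.le]; exact hj
  rw [seqL_pos (lt_of_lt_of_le hj hlen), seqL_pos hjt] at this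
  have := f_inj this
  rw [this]
  exact List.getElem_take

lemma lbelow_mono {δ γ : Ordinal} {α α' : Ordinal} (h : α ≤ α') :
    Lbelow δ γ α ⊆ Lbelow δ γ α' := by
  rcases h.lt_or_eq with h | rfl
  · intro z hz
    refine ⟨hz.1, llt_trans hz.2 ?_⟩
    exact llt_at (k := 0) (by simp) (by simp) (by simp) (by simpa using pos_lt_pos.2 h)
  · exact subset_rfl

lemma lbelow_vs_jset {δ γ τ : Ordinal} {S : Ordinal → Set Ordinal} (α : Ordinal)
    {x : List SOrd} (hx : Relevant δ γ τ S x) :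
    Jset δ γ x ⊆ Lbelow δ γ α ∨ Lbelow δ γ α ∩ Jset δ γ x = ∅ := by
  have hxlen : 3 ≤ x.length := hx.2.1
  have hne : x ≠ [SOrd.pos α] := by
    intro h
    rw [h] at hxlen
    simp at hxlen
  rcases llt_total hne with h | h
  · exact Or.inl fun w hw => ⟨hw.1, llt_trans hw.2.2 h⟩
  · right
    rcases h with ⟨k, hk1, hk2, hteq, hlt⟩ | ⟨h1, hteq, hpos⟩ | ⟨h1, hteq, hneg⟩
    · -- k = 0, pos α < x[0]
      have hk0 : k = 0 := by simpa using hk1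
      subst hk0
      ext w
      simp only [Set.mem_inter_iff, Set.mem_empty_iff_false, iff_false, not_and]
      intro hwB hwJ
      obtain ⟨hwlen, hwj⟩ := jset_prefix hx hwJ
      have h0m : 0 < x.length - 1 := by omega
      have hw0 : w[0]'(by omega) = x[0]'(by omega) := hwj 0 h0m
      have : Llt [SOrd.pos α] w := by
        refine llt_at (k := 0) (by simp) (by omega) (by simp) ?_
        rw [hw0]
        simpa using hlt
      exact llt_asymm hwB.2 this
    · -- IsPos x[1] contradiction
      exfalso
      have h1x : (1:ℕ) < x.length := by simpa using h1
      have hpos' : SOrd.IsPos (x[1]'h1x) := by simpa using hpos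
      have := (hx.2.2.2.1 1 h1x).1 hpos'
      omega
    · exfalso
      have : x.length < 1 := by simpa using h1
      omega

lemma jset_vs_jset_aux {δ γ τ : Ordinal} {S : Ordinal → Set Ordinal} {x y : List SOrd}
    (hx : Relevant δ γ τ S x) (hy : Relevant δ γ τ S y) (hmn : x.length ≤ y.length)
    {z : List SOrd} (hzx : z ∈ Jset δ γ x) (hzy : z ∈ Jset δ γ y) :
    Jset δ γ x ⊆ Jset δ γ y ∨ Jset δ γ y ⊆ Jset δ γ x ∨ Jset δ γ x ∩ Jset δ γ y = ∅ := by
  set m := x.length - 1 with hmdef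
  set n := y.length - 1 with hndef
  have hxlen : 3 ≤ x.length := hx.2.1
  have hylen : 3 ≤ y.length := hy.2.1
  have hmlt : m < x.length := by omega
  have hnlt : n < y.length := by omega
  have hmn' : m ≤ n := by omega
  obtain ⟨hzxl, hzxj⟩ := jset_prefix hx hzx
  obtain ⟨hzyl, hzyj⟩ := jset_prefix hy hzy
  have hxyj : ∀ j (hj : j < m), x[j]'(by omega) = y[j]'(by omega) := fun j hj =>
    (hzxj j hj).symm.trans (hzyj j (lt_of_lt_of_le hj hmn'))
  rcases hmn'.lt_or_eq with hlt | heq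
  · -- m < n
    have hmy : m < y.length := by omega
    have hmeven : m % 2 = 0 := by
      have := hx.2.2.1; omega
    have hym_pos : SOrd.IsPos (y[m]'hmy) := (hy.2.2.2.1 m hmy).2 hmeven
    rcases lt_trichotomy (y[m]'hmy) (x[m]'hmlt) with hc | hc | hc
    · -- J_y ⊆ J_x
      right; left
      intro w hw
      obtain ⟨hwl, hwj⟩ := jset_prefix hy hw
      have hmw : m < w.length := by omega
      have hwx : ∀ j (hj : j < m), w[j]'(by omega) = x[j]'(by omega) := fun j hj =>
        (hwj j (hj.trans hlt)).trans (hxyj j hj).symm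
      have htke : w.take m = x.take m :=
        take_eq' (by omega) (by omega) hwx
      refine ⟨hw.1, Or.inr ?_, ?_⟩
      · refine llt_prefix_pos hmw (x.take m) htke.symm ?_
        rw [hwj m hlt]
        exact hym_pos
      · refine llt_at hmw hmlt htke ?_
        rw [hwj m hlt]
        exact hc
    · -- y[m] = x[m]
      have hx1 : ∀ j (hj : j < m + 1), x[j]'(by omega) = y[j]'(by omega) := by
        intro j hj
        rcases Nat.lt_or_ge j m with h' | h'
        · exact hxyj j h'
        · have : j = m := by omega
          subst this
          exact hc.symm
      have hm1n : m + 1 ≤ n := hlt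
      rcases hm1n.lt_or_eq with hlt2 | heq2
      · -- m + 1 < n : J_y ⊆ J_x
        right; left
        intro w hw
        obtain ⟨hwl, hwj⟩ := jset_prefix hy hw
        have hm1w : m + 1 < w.length := by omega
        have hxw : x = w.take (m+1) := by
          have h0 : x.take (m+1) = w.take (m+1) := by
            refine take_eq' (by omega) (by omega) fun j hj => ?_
            rw [hx1 j hj]
            exact (hwj j (by omega)).symm
          rw [← h0]
          exact (List.take_of_length_le (by omega)).symm
        have hnegw : ¬ SOrd.IsPos (w[m+1]'hm1w) := by
          rw [hwj (m+1) (by omega)]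
          intro hp
          have := (hy.2.2.2.1 (m+1) (by omega)).1 hp
          omega
        refine ⟨hw.1, Or.inr ?_, ?_⟩
        · refine llt_prefix_pos (by omega : m < w.length) (x.take m) ?_ ?_
          · refine ((take_eq' (by omega) (by omega) fun j hj => ?_) : x.take m = w.take m)
            rw [hxyj j hj]
            exact (hwj j (by omega)).symm
          · rw [hwj m (by omega)]
            exact hym_pos
        · exact llt_prefix_neg hm1w x hxw hnegw
      · -- m + 1 = n : disjoint
        right; right
        ext w
        simp only [Set.mem_inter_iff, Set.mem_empty_iff_false, iff_false, not_and]
        intro hw1 hw2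
        have hyx : y.take n = x := by
          have h0 : y.take n = x.take n := by
            refine take_eq' (by omega) (by omega : n ≤ x.length) fun j hj => ?_
            exact (hx1 j (by omega)).symm
          rw [h0]
          exact List.take_of_length_le (by omega)
        rcases hw2.2.1 with h | h
        · rw [hyx] at h
          subst h
          exact llt_irrefl _ hw1.2.2
        · rw [hyx] at h
          exact llt_asymm hw1.2.2 h
    · -- x[m] < y[m] : disjoint
      right; right
      ext w
      simp only [Set.mem_inter_iff, Set.mem_empty_iff_false, iff_false, not_and]
      intro hw1 hw2
      obtain ⟨hwl, hwj⟩ := jset_prefix hy hw2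
      have hmw : m < w.length := by omega
      have : Llt x w := by
        refine llt_at hmlt hmw ?_ ?_
        · refine take_eq' (by omega) (by omega) fun j hj => ?_
          rw [hxyj j hj]
          exact (hwj j (by omega)).symm
        · rw [hwj m (by omega)]
          exact hc
      exact llt_asymm hw1.2.2 this
  · -- m = n
    have hteq : x.take m = y.take n := by
      rw [heq]
      refine take_eq' (by omega) (by omega) fun j hj => ?_
      exact hxyj j (by omega)
    by_cases hxy : x = y
    · subst hxy; exact Or.inl subset_rfl
    rcases llt_total hxy with h | h
    · left
      intro w hw
      refine ⟨hw.1, ?_, llt_trans hw.2.2 h⟩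
      rcases hw.2.1 with h' | h'
      · exact Or.inl (h'.trans hteq)
      · exact Or.inr (hteq ▸ h')
    · right; left
      intro w hw
      refine ⟨hw.1, ?_, llt_trans hw.2.2 h⟩
      rcases hw.2.1 with h' | h'
      · exact Or.inl (h'.trans hteq.symm)
      · exact Or.inr (hteq.symm ▸ h')

lemma jset_vs_jset {δ γ τ : Ordinal} {S : Ordinal → Set Ordinal} {x y : List SOrd}
    (hx : Relevant δ γ τ S x) (hy : Relevant δ γ τ S y) :
    Jset δ γ x ⊆ Jset δ γ y ∨ Jset δ γ y ⊆ Jset δ γ x ∨ Jset δ γ x ∩ Jset δ γ y = ∅ := by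
  by_cases hne : (Jset δ γ x ∩ Jset δ γ y).Nonempty
  · obtain ⟨z, hz1, hz2⟩ := hne
    rcases le_total x.length y.length with h | h
    · exact jset_vs_jset_aux hx hy h hz1 hz2
    · rcases jset_vs_jset_aux hy hx h hz2 hz1 with h' | h' | h'
      · exact Or.inr (Or.inl h')
      · exact Or.inl h'
      · exact Or.inr (Or.inr (by rw [Set.inter_comm]; exact h'))
  · exact Or.inr (Or.inr (Set.not_nonempty_iff_eq_empty.1 hne))

end BasicAux

/-- For any two basic sets `B₁, B₂` of `⟨L^{δ,γ}, I^{Σ,γ}⟩`, either `B₁ ⊆ B₂`,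
or `B₂ ⊆ B₁`, or `B₁ ∩ B₂ = ∅`. -/

theorem basic_sets_trichotomy (δ γ τ : Ordinal) (hδ : δ ≠ 0) (hγ : γ ≠ 0)
    (S : Ordinal → Set Ordinal) (hS : IsPartition δ τ S)
    (B₁ B₂ : Set (List SOrd)) (h1 : IsBasic δ γ τ S B₁) (h2 : IsBasic δ γ τ S B₂) :
    B₁ ⊆ B₂ ∨ B₂ ⊆ B₁ ∨ B₁ ∩ B₂ = ∅ := by
  rcases h1 with ⟨α, hα, rfl⟩ | ⟨x, hxrel, rfl⟩ | ⟨z, hzL, rfl⟩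
  · rcases h2 with ⟨α', hα', rfl⟩ | ⟨y, hyrel, rfl⟩ | ⟨z, hzL, rfl⟩
    · rcases le_total α α' with h | h
      · exact Or.inl (lbelow_mono h)
      · exact Or.inr (Or.inl (lbelow_mono h))
    · rcases lbelow_vs_jset α hyrel with h | h
      · exact Or.inr (Or.inl h)
      · exact Or.inr (Or.inr h)
    · by_cases hz : z ∈ Lbelow δ γ α
      · exact Or.inr (Or.inl (Set.singleton_subset_iff.2 hz))
      · exact Or.inr (Or.inr (Set.inter_singleton_eq_empty.2 hz))
  · rcases h2 with ⟨α', hα', rfl⟩ | ⟨y, hyrel, rfl⟩ | ⟨z, hzL, rfl⟩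
    · rcases lbelow_vs_jset α' hxrel with h | h
      · exact Or.inl h
      · exact Or.inr (Or.inr (by rw [Set.inter_comm]; exact h))
    · exact jset_vs_jset hxrel hyrel
    · by_cases hz : z ∈ Jset δ γ x
      · exact Or.inr (Or.inl (Set.singleton_subset_iff.2 hz))
      · exact Or.inr (Or.inr (Set.inter_singleton_eq_empty.2 hz))
  · by_cases hz : z ∈ B₂
    · exact Or.inl (Set.singleton_subset_iff.2 hz)
    · exact Or.inr (Or.inr (Set.singleton_inter_eq_empty.2 hz))
end

section
/- Let δ, γ be nonzero ordinals, τ an ordinal, and Σ = ⟨S_β : β < τ⟩ a partition of δ*. For every X ∈ I^{Σ,γ} with X ≠ L^{δ,γ} there exists x ∈ L^{δ,γ} with X ⊆ L^{δ,γ}_x, and hence X ∈ I^{Σ,γ}_x; in other words, I^{Σ,γ} = ⋃_{x∈L^{δ,γ}} I^{Σ,γ}_x ∪ {L^{δ,γ}}. -/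
open Ordinal Cardinal

namespace SOrdAux

lemma scases (a : SOrd) : (∃ ξ, a = SOrd.neg ξ) ∨ ∃ α, a = SOrd.pos α := by
  rcases h : ofLex a with b | α
  · exact Or.inl ⟨OrderDual.ofDual b, by rw [← toLex_ofLex a, h]; rfl⟩
  · exact Or.inr ⟨α, by rw [← toLex_ofLex a, h]; rfl⟩

lemma neg_lt_pos (ξ α : Ordinal) : SOrd.neg ξ < SOrd.pos α := by
  simp only [SOrd.neg, SOrd.pos, Sum.Lex.toLex_lt_toLex]
  exact Sum.Lex.sep _ _

lemma pos_lt_pos {α β : Ordinal} : SOrd.pos α < SOrd.pos β ↔ α < β := by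
  simp [SOrd.pos, Sum.Lex.toLex_lt_toLex]

lemma neg_lt_neg {ξ η : Ordinal} : SOrd.neg ξ < SOrd.neg η ↔ η < ξ := by
  simp [SOrd.neg, Sum.Lex.toLex_lt_toLex]

lemma not_pos_lt_neg (α ξ : Ordinal) : ¬ SOrd.pos α < SOrd.neg ξ := by
  simp only [SOrd.neg, SOrd.pos, Sum.Lex.toLex_lt_toLex]
  intro h; exact Sum.lex_inr_inl h

lemma isPos_pos (α : Ordinal) : SOrd.IsPos (SOrd.pos α) := ⟨α, rfl⟩

lemma not_isPos_neg (ξ : Ordinal) : ¬ SOrd.IsPos (SOrd.neg ξ) := by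
  rintro ⟨α, h⟩
  exact absurd (congrArg ofLex h) (by simp [SOrd.neg, SOrd.pos])

/-- Shift: negatives fixed, positive `α ↦ α+1`. -/
noncomputable def shift (a : SOrd) : SOrd :=
  Sum.elim (fun b => SOrd.neg (OrderDual.ofDual b)) (fun α => SOrd.pos (α + 1)) (ofLex a)

@[simp] lemma shift_neg (ξ : Ordinal) : shift (SOrd.neg ξ) = SOrd.neg ξ := rfl
@[simp] lemma shift_pos (α : Ordinal) : shift (SOrd.pos α) = SOrd.pos (α + 1) := rfl

lemma shift_strictMono : StrictMono shift := by
  intro a b hab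
  rcases scases a with ⟨ξ, rfl⟩ | ⟨α, rfl⟩ <;> rcases scases b with ⟨η, rfl⟩ | ⟨β, rfl⟩
  · simpa using (neg_lt_neg.mpr (neg_lt_neg.mp hab))
  · simpa using neg_lt_pos ξ (β + 1)
  · exact absurd hab (not_pos_lt_neg _ _)
  · simpa using pos_lt_pos.mpr
      (by rw [Ordinal.add_one_eq_succ, Ordinal.add_one_eq_succ]; exact Order.succ_lt_succ (pos_lt_pos.mp hab))

/-- Append a "marker" `pos 0` after shifting all positive entries up by one; this converts
the order `Llt` into the plain lexicographic order on lists. -/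
noncomputable def g (z : List SOrd) : List SOrd := z.map shift ++ [SOrd.pos 0]

lemma lex_of_take {α : Type*} [LT α] :
    ∀ (k : ℕ) (u v : List α), u.take k = v.take k →
    ∀ (hu : k < u.length) (hv : k < v.length), u[k] < v[k] → List.Lex (· < ·) u v := by
  intro k
  induction k with
  | zero =>
    rintro (_ | ⟨a, u⟩) (_ | ⟨b, v⟩) _ hu hv hlt <;> simp at hu hv
    exact List.Lex.rel hlt
  | succ k ih =>
    rintro (_ | ⟨a, u⟩) (_ | ⟨b, v⟩) ht hu hv hlt <;> simp at hu hv
    · simp [List.take_succ_cons] at ht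
      obtain ⟨rfl, ht⟩ := ht
      exact List.Lex.cons (ih u v ht (by omega) (by omega) (by simpa using hlt))

lemma take_g {z : List SOrd} {k : ℕ} (hk : k ≤ z.length) :
    (g z).take k = (z.take k).map shift := by
  unfold g
  rw [List.take_append_of_le_length (by simpa using hk), List.map_take]

lemma getElem_g_lt {z : List SOrd} {k : ℕ} (hk : k < z.length) :
    (g z)[k]'(by simp [g]; omega) = shift (z[k]'hk) := by
  unfold g
  rw [List.getElem_append_left (by simpa using hk), List.getElem_map]

lemma getElem_g_len (z : List SOrd) :
    (g z)[z.length]'(by simp [g]) = SOrd.pos 0 := by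
  unfold g
  rw [List.getElem_append_right (by simp)]
  simp

lemma key1 {a b : List SOrd} (h : Llt a b) : List.Lex (· < ·) (g a) (g b) := by
  rcases h with ⟨k, hx, hy, ht, hlt⟩ | ⟨hy, ht, hp⟩ | ⟨hx, ht, hp⟩
  · refine lex_of_take k (g a) (g b) ?_ (by simp [g]; omega) (by simp [g]; omega) ?_
    · rw [take_g hx.le, take_g hy.le, ht]
    · rw [getElem_g_lt hx, getElem_g_lt hy]; exact shift_strictMono hlt
  · obtain ⟨α, hα⟩ := hp
    refine lex_of_take a.length (g a) (g b) ?_ (by simp [g]) (by simp [g]; omega) ?_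
    · rw [take_g (le_refl _), take_g hy.le, ht, List.take_length]
    · rw [getElem_g_len, getElem_g_lt hy, hα, shift_pos]
      exact pos_lt_pos.mpr
        (by rw [Ordinal.add_one_eq_succ]; exact (zero_le (a := α)).trans_lt (Order.lt_succ α))
  · rcases scases (a[b.length]'hx) with ⟨ξ, hξ⟩ | ⟨α, hα⟩
    · refine lex_of_take b.length (g a) (g b) ?_ (by simp [g]; omega) (by simp [g]) ?_
      · rw [take_g hx.le, take_g (le_refl _), ht, List.take_length]
      · rw [getElem_g_len, getElem_g_lt hx, hξ, shift_neg]; exact neg_lt_pos _ _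
    · exact absurd ⟨α, hα⟩ hp

lemma tot (a b : List SOrd) : a = b ∨ Llt a b ∨ Llt b a := by
  classical
  by_cases h : ∃ k, ∃ (ha : k < a.length) (hb : k < b.length), a[k]'ha ≠ b[k]'hb
  · right
    obtain ⟨ha, hb, hne⟩ := Nat.find_spec h
    set k := Nat.find h with hkdef
    have htake : a.take k = b.take k := by
      apply List.ext_getElem (by simp; omega)
      intro n h1 h2
      have hn : n < k := by simp at h1; omega
      simp only [List.getElem_take]
      by_contra hcon
      exact Nat.find_min h hn ⟨by omega, by omega, hcon⟩
    rcases lt_or_gt_of_ne hne with hlt | hlt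
    · exact Or.inl (Or.inl ⟨k, ha, hb, htake, hlt⟩)
    · exact Or.inr (Or.inl ⟨k, hb, ha, htake.symm, hlt⟩)
  · push_neg at h
    rcases lt_trichotomy a.length b.length with hl | hl | hl
    · have htake : b.take a.length = a := by
        apply List.ext_getElem (by simp; omega)
        intro n h1 h2
        simp only [List.getElem_take]
        exact (h n h2 (by simp at h1; omega)).symm
      rcases scases (b[a.length]'hl) with ⟨ξ, hξ⟩ | ⟨α, hα⟩
      · exact Or.inr (Or.inr (Or.inr (Or.inr ⟨hl, htake, by rw [hξ]; exact not_isPos_neg ξ⟩)))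
      · exact Or.inr (Or.inl (Or.inr (Or.inl ⟨hl, htake, ⟨α, hα⟩⟩)))
    · exact Or.inl (List.ext_getElem hl (fun n h1 h2 => h n h1 h2))
    · have htake : a.take b.length = b := by
        apply List.ext_getElem (by simp; omega)
        intro n h1 h2
        simp only [List.getElem_take]
        exact h n (by simp at h1; omega) h2
      rcases scases (a[b.length]'hl) with ⟨ξ, hξ⟩ | ⟨α, hα⟩
      · exact Or.inr (Or.inl (Or.inr (Or.inr ⟨hl, htake, by rw [hξ]; exact not_isPos_neg ξ⟩)))
      · exact Or.inr (Or.inr (Or.inr (Or.inl ⟨hl, htake, ⟨α, hα⟩⟩)))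

lemma llt_iff {a b : List SOrd} : Llt a b ↔ List.Lex (· < ·) (g a) (g b) := by
  constructor
  · exact key1
  · intro hlex
    rcases tot a b with rfl | h | h
    · exact (asymm hlex hlex).elim
    · exact h
    · exact (asymm hlex (key1 h)).elim

lemma llt_trans {a b c : List SOrd} (h1 : Llt a b) (h2 : Llt b c) : Llt a c :=
  llt_iff.mpr (List.lex_trans lt_trans (llt_iff.mp h1) (llt_iff.mp h2))

lemma Lx_mono {δ γ : Ordinal} {x y : List SOrd} (h : Llt x y) : Lx δ γ x ⊆ Lx δ γ y :=
  fun z hz => ⟨hz.1, llt_trans hz.2 h⟩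

lemma pos_mem_Lset {δ γ α : Ordinal} (hα : α < γ) : [SOrd.pos α] ∈ Lset δ γ :=
  ⟨by simp, ⟨by simp, α, hα, rfl⟩, fun k h hk => by simp at h; omega⟩

lemma llt_pos_gamma {δ γ : Ordinal} {z : List SOrd} (hz : z ∈ Lset δ γ) :
    Llt z [SOrd.pos γ] := by
  obtain ⟨hne, ⟨h0, α, hαγ, h0eq⟩, _⟩ := hz
  exact Or.inl ⟨0, h0, by simp, rfl, by rw [h0eq]; exact pos_lt_pos.mpr hαγ⟩

lemma Lbelow_gamma {δ γ : Ordinal} : Lbelow δ γ γ = Lset δ γ :=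
  Set.ext fun z => ⟨fun h => h.1, fun h => ⟨h, llt_pos_gamma h⟩⟩

lemma append_mem_Lset {δ γ : Ordinal} (hδ : δ ≠ 0) {z : List SOrd} (hz : z ∈ Lset δ γ) :
    z ++ [SOrd.pos 0] ∈ Lset δ γ ∧ Llt z (z ++ [SOrd.pos 0]) := by
  obtain ⟨hne, ⟨h0, α, hαγ, h0eq⟩, hbet⟩ := hz
  have hzlen : 0 < z.length := List.length_pos_iff.mpr hne
  constructor
  · refine ⟨by simp, ⟨by simp, α, hαγ, ?_⟩, ?_⟩
    · rw [List.getElem_append_left hzlen]; exact h0eq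
    · intro k h hk
      rcases lt_or_ge k z.length with hkz | hkz
      · rw [List.getElem_append_left hkz]; exact hbet k hkz hk
      · have hk' : k = z.length := by simp at h; omega
        subst hk'
        rw [List.getElem_append_right (le_refl _)]
        simp only [Nat.sub_self, List.getElem_cons_zero]
        exact ⟨neg_lt_pos δ 0, pos_lt_pos.mpr (pos_iff_ne_zero.mpr hδ)⟩
  · refine Or.inr (Or.inl ⟨by simp, ?_, ?_⟩)
    · rw [List.take_append_of_le_length (le_refl _), List.take_length]
    · rw [List.getElem_append_right (le_refl _)]
      simp only [Nat.sub_self, List.getElem_cons_zero]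
      exact isPos_pos 0

lemma union_bound {δ γ : Ordinal} (hγ : γ ≠ 0) (E : Finset (Set (List SOrd)))
    (hE : ∀ B ∈ E, ∃ x ∈ Lset δ γ, B ⊆ Lx δ γ x) :
    ∃ x ∈ Lset δ γ, (⋃ B ∈ E, B) ⊆ Lx δ γ x := by
  classical
  induction E using Finset.induction with
  | empty =>
    exact ⟨[SOrd.pos 0], pos_mem_Lset (pos_iff_ne_zero.mpr hγ), by simp⟩
  | @insert B E hBE ih =>
    obtain ⟨x₁, hx₁, hsub₁⟩ := hE B (Finset.mem_insert_self B E)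
    obtain ⟨x₂, hx₂, hsub₂⟩ := ih (fun C hC => hE C (Finset.mem_insert_of_mem hC))
    have hunion : (⋃ C ∈ insert B E, C) = B ∪ ⋃ C ∈ E, C := by
      simp [Set.biUnion_insert]
    rcases tot x₁ x₂ with rfl | h12 | h21
    · exact ⟨x₁, hx₁, by rw [hunion]; exact Set.union_subset hsub₁ hsub₂⟩
    · exact ⟨x₂, hx₂, by
        rw [hunion]
        exact Set.union_subset (hsub₁.trans (Lx_mono h12)) hsub₂⟩
    · exact ⟨x₁, hx₁, by
        rw [hunion]
        exact Set.union_subset hsub₁ (hsub₂.trans (Lx_mono h21))⟩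

lemma basic_subset {δ γ τ : Ordinal} {S : Ordinal → Set Ordinal} {B : Set (List SOrd)}
    (hB : IsBasic δ γ τ S B) : B ⊆ Lset δ γ := by
  rcases hB with ⟨α, hαγ, rfl⟩ | ⟨x, hrel, rfl⟩ | ⟨z, hz, rfl⟩
  · exact fun z hz => hz.1
  · exact fun z hz => hz.1
  · exact fun w hw => by rw [Set.mem_singleton_iff] at hw; rw [hw]; exact hz

end SOrdAux

/-- For every `X ∈ I^{Σ,γ}` with `X ≠ L^{δ,γ}` there is `x ∈ L^{δ,γ}` with
`X ⊆ L^{δ,γ}_x`, hence `X ∈ I^{Σ,γ}_x`; i.e.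
`I^{Σ,γ} = ⋃_{x ∈ L^{δ,γ}} I^{Σ,γ}_x ∪ {L^{δ,γ}}`. -/
theorem Ifam_eq_union_Ix (δ γ τ : Ordinal) (hδ : δ ≠ 0) (hγ : γ ≠ 0)
    (S : Ordinal → Set Ordinal) (hS : IsPartition δ τ S) :
    (∀ X ∈ Ifam δ γ τ S, X ≠ Lset δ γ →
        ∃ x ∈ Lset δ γ, X ⊆ Lx δ γ x ∧ X ∈ Ix δ γ τ S x) ∧
    Ifam δ γ τ S = {A | ∃ x ∈ Lset δ γ, A ∈ Ix δ γ τ S x} ∪ {Lset δ γ} := by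
  open SOrdAux in
  have part1 : ∀ X ∈ Ifam δ γ τ S, X ≠ Lset δ γ →
      ∃ x ∈ Lset δ γ, X ⊆ Lx δ γ x ∧ X ∈ Ix δ γ τ S x := by
    intro X hX hne
    obtain ⟨E, hE, rfl⟩ := hX
    have hb : ∀ B ∈ E, ∃ x ∈ Lset δ γ, B ⊆ Lx δ γ x := by
      intro B hBE
      rcases hE B hBE with ⟨α, hαγ, rfl⟩ | ⟨x, hrel, rfl⟩ | ⟨z, hz, rfl⟩
      · rcases lt_or_eq_of_le hαγ with hlt | heq
        · exact ⟨[SOrd.pos α], pos_mem_Lset hlt, fun z hz => hz⟩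
        · exfalso
          apply hne
          apply Set.Subset.antisymm
          · exact Set.iUnion₂_subset fun C hC => basic_subset (hE C hC)
          · intro z hz
            have hzB : z ∈ Lbelow δ γ α := by rw [heq, Lbelow_gamma]; exact hz
            exact Set.mem_biUnion hBE hzB
      · exact ⟨x, hrel.1, fun z hz => ⟨hz.1, hz.2.2⟩⟩
      · obtain ⟨hmem, hlt⟩ := append_mem_Lset hδ hz
        refine ⟨z ++ [SOrd.pos 0], hmem, ?_⟩
        intro w hw
        rw [Set.mem_singleton_iff] at hw
        rw [hw]
        exact ⟨hz, hlt⟩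
    obtain ⟨x, hx, hsub⟩ := union_bound hγ E hb
    exact ⟨x, hx, hsub, hsub, ⟨E, hE, rfl⟩⟩
  refine ⟨part1, ?_⟩
  ext A
  constructor
  · intro hA
    by_cases hAe : A = Lset δ γ
    · exact Or.inr hAe
    · obtain ⟨x, hx, _, hmem⟩ := part1 A hA hAe
      exact Or.inl ⟨x, hx, hmem⟩
  · rintro (⟨x, hx, _, hmem⟩ | hA)
    · exact hmem
    · rw [Set.mem_singleton_iff] at hA
      subst hA
      refine ⟨{Lbelow δ γ γ}, ?_, ?_⟩
      · intro B hB
        rw [Finset.mem_singleton] at hB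
        rw [hB]
        exact Or.inl ⟨γ, le_rfl, rfl⟩
      · simp [SOrdAux.Lbelow_gamma]
end

section
/- Let θ be an uncountable regular cardinal, δ, γ nonzero ordinals, and Σ = ⟨S_β : β < θ⟩ a partition of δ*. If A ⊆ L^{δ,γ} has cardinality less than θ, then the trace {A ∩ X : X ∈ I^{Σ,γ}} has cardinality less than θ; in particular the family I(A) := ⋃_{x∈A}{A ∩ X : X ∈ I^{Σ,γ}_x} ∪ {A} has cardinality less than θ. -/
open Ordinal Cardinal

lemma range_monotone_le {X : Type 1} (f : Ordinal → Set X) (hf : Monotone f)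
    (A : Set X) (hA : ∀ β, f β ⊆ A) :
    Cardinal.mk (Set.range f) ≤ Cardinal.mk A + 1 := by
  classical
  have key : ∀ T : Set.range f, (∃ β, (T : Set X) ⊂ f β) →
      ∃ a, a ∈ A ∧ a ∈ f (sInf {β | (T : Set X) ⊂ f β}) ∧ a ∉ (T : Set X) := by
    intro T hT
    have hmem : sInf {β | (T : Set X) ⊂ f β} ∈ {β | (T : Set X) ⊂ f β} := csInf_mem hT
    obtain ⟨a, ha, hna⟩ := Set.exists_of_ssubset hmem
    exact ⟨a, hA _ ha, ha, hna⟩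
  let g : Set.range f → Option A := fun T =>
    if hT : ∃ β, (T : Set X) ⊂ f β then some ⟨(key T hT).choose, (key T hT).choose_spec.1⟩
    else none
  have claim : ∀ (T U : Set.range f) (hT : ∃ β, (T : Set X) ⊂ f β)
      (hU : ∃ β, (U : Set X) ⊂ f β), (T : Set X) ⊂ (U : Set X) →
      (key T hT).choose ≠ (key U hU).choose := by
    rintro T ⟨U, β', rfl⟩ hT hU hTU h
    have h1 : f (sInf {β | (T : Set X) ⊂ f β}) ⊆ f β' := hf (csInf_le' hTU)
    have h2 : (key T hT).choose ∈ f β' := h1 (key T hT).choose_spec.2.1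
    rw [h] at h2
    exact (key _ hU).choose_spec.2.2 h2
  have hchain : ∀ T U : Set.range f, (T : Set X) ⊆ U ∨ (U : Set X) ⊆ T := by
    rintro ⟨T, β, rfl⟩ ⟨U, β', rfl⟩
    rcases le_total β β' with h | h
    · exact Or.inl (hf h)
    · exact Or.inr (hf h)
  have hssub : ∀ T U : Set.range f, T ≠ U → (T : Set X) ⊂ U ∨ (U : Set X) ⊂ T := by
    intro T U hne
    have hne' : (T : Set X) ≠ U := fun h => hne (Subtype.ext h)
    rcases hchain T U with h | h
    · exact Or.inl ⟨h, fun h' => hne' (Set.Subset.antisymm h h')⟩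
    · exact Or.inr ⟨h, fun h' => hne' (Set.Subset.antisymm h' h)⟩
  have hginj : Function.Injective g := by
    intro T U hTU
    by_contra hne
    by_cases hT : ∃ β, (T : Set X) ⊂ f β <;> by_cases hU : ∃ β, (U : Set X) ⊂ f β
    · simp only [g, dif_pos hT, dif_pos hU, Option.some.injEq, Subtype.mk.injEq] at hTU
      rcases hssub T U hne with h | h
      · exact claim T U hT hU h hTU
      · exact claim U T hU hT h hTU.symm
    · simp [g, dif_pos hT, dif_neg hU] at hTU
    · simp [g, dif_neg hT, dif_pos hU] at hTU
    · rcases hssub T U hne with h | h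
      · rcases U with ⟨U, β', rfl⟩
        exact hT ⟨β', h⟩
      · rcases T with ⟨T, β', rfl⟩
        exact hU ⟨β', h⟩
  calc Cardinal.mk (Set.range f) ≤ Cardinal.mk (Option A) := Cardinal.mk_le_of_injective hginj
    _ = Cardinal.mk A + 1 := Cardinal.mk_option

lemma SOrd.pos_lt_pos {a b : Ordinal} (h : a < b) : SOrd.pos a < SOrd.pos b :=
  Sum.Lex.inr_lt_inr_iff.2 h

lemma getElem_eq_of_take_eq_s5 {X : Type*} {a b : List X} {k j : ℕ} (h : a.take k = b.take k)
    (hj : j < k) (hja : j < a.length) (hjb : j < b.length) : a[j]'hja = b[j]'hjb := by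
  have h2 := congrArg (fun l : List X => l[j]?) h
  simp only [List.getElem?_take, if_pos hj] at h2
  rw [List.getElem?_eq_getElem hja, List.getElem?_eq_getElem hjb] at h2
  exact Option.some_injective _ h2

lemma take_eq_take_of_le {X : Type*} {a b : List X} {k k' : ℕ} (h : a.take k = b.take k)
    (hk : k' ≤ k) : a.take k' = b.take k' := by
  have := congrArg (List.take k') h
  simpa [List.take_take, min_eq_left hk] using this

lemma getElem_of_take_eq_append {X : Type*} {w y : List X} {a : X}
    (h : w.take (y.length + 1) = y ++ [a]) :
    ∃ hw : y.length < w.length, w[y.length]'hw = a ∧ w.take y.length = y := by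
  have hlen : (w.take (y.length + 1)).length = y.length + 1 := by rw [h]; simp
  rw [List.length_take] at hlen
  have hw : y.length < w.length := by omega
  refine ⟨hw, ?_, ?_⟩
  · have h2 := congrArg (fun l : List X => l[y.length]?) h
    simp only [List.getElem?_take, if_pos (Nat.lt_succ_self _)] at h2
    rw [List.getElem?_eq_getElem hw] at h2
    have h3 : (y ++ [a])[y.length]? = some a := by
      rw [List.getElem?_eq_getElem (by simp)]
      rw [List.getElem_concat_length rfl]
    rw [h3] at h2
    exact Option.some_injective _ h2
  · have := congrArg (List.take y.length) h
    rw [List.take_take, min_eq_left (Nat.le_succ _), List.take_append_of_le_length le_rfl,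
      List.take_length] at this
    exact this

lemma Llt_append_pos_mono {y w : List SOrd} {α α' : Ordinal} (hle : α ≤ α')
    (hw : Llt w (y ++ [SOrd.pos α])) : Llt w (y ++ [SOrd.pos α']) := by
  rcases eq_or_lt_of_le hle with rfl | hlt
  · exact hw
  rcases hw with ⟨k, hx, hy, hteq, hklt⟩ | ⟨hy, hteq, hpos⟩ | ⟨hx, hteq, hpos⟩
  · have hk' : k ≤ y.length := by simp at hy; omega
    rcases lt_or_eq_of_le hk' with hk | hk
    · refine Or.inl ⟨k, hx, by simp; omega, ?_, ?_⟩
      · rw [List.take_append_of_le_length hk.le] at hteq ⊢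
        exact hteq
      · rw [List.getElem_append_left hk] at hklt ⊢
        exact hklt
    · subst hk
      refine Or.inl ⟨y.length, hx, by simp, ?_, ?_⟩
      · rw [List.take_append_of_le_length le_rfl, List.take_length] at hteq ⊢
        exact hteq
      · rw [List.getElem_concat_length rfl] at hklt ⊢
        exact lt_trans hklt (SOrd.pos_lt_pos hlt)
  · have hk' : w.length ≤ y.length := by simp at hy; omega
    rcases lt_or_eq_of_le hk' with hk | hk
    · refine Or.inr (Or.inl ⟨by simp; omega, ?_, ?_⟩)
      · rw [List.take_append_of_le_length hk.le] at hteq ⊢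
        exact hteq
      · rw [List.getElem_append_left hk] at hpos ⊢
        exact hpos
    · refine Or.inr (Or.inl ⟨by simp; omega, ?_, ?_⟩)
      · rw [hk, List.take_append_of_le_length le_rfl, List.take_length] at hteq ⊢
        exact hteq
      · rw [List.getElem_concat_length hk]
        exact ⟨α', rfl⟩
  · have hlen : (y ++ [SOrd.pos α]).length = y.length + 1 := by simp
    rw [hlen] at hx hteq
    obtain ⟨hw', hwy, hwtake⟩ := getElem_of_take_eq_append hteq
    refine Or.inl ⟨y.length, hw', by simp, ?_, ?_⟩
    · rw [List.take_append_of_le_length le_rfl, List.take_length]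
      exact hwtake
    · rw [hwy, List.getElem_concat_length rfl]
      exact SOrd.pos_lt_pos hlt

lemma take_eq_of_mem_J {δ γ : Ordinal} {x z : List SOrd} (hx1 : 1 ≤ x.length)
    (hz : z ∈ Jset δ γ x) :
    x.length - 1 ≤ z.length ∧ z.take (x.length - 1) = x.take (x.length - 1) := by
  obtain ⟨hzL, hge, hlt⟩ := hz
  have hylen : (x.take (x.length - 1)).length = x.length - 1 := by
    rw [List.length_take]; omega
  rcases hge with heq | hge
  · refine ⟨by rw [heq, hylen], ?_⟩
    rw [heq, List.take_take, min_self]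
  rcases hge with ⟨k, hky, hkz, hteq, hklt⟩ | ⟨h1, h2, _⟩ | ⟨h1, h2, h3⟩
  · -- first difference at k < x.length - 1 : contradiction with hlt
    exfalso
    rw [hylen] at hky
    have hkx : k < x.length := by omega
    have hyk : (x.take (x.length - 1))[k]'(by rw [hylen]; omega) = x[k]'hkx :=
      List.getElem_take
    have hytk : ∀ k' ≤ k, (x.take (x.length - 1)).take k' = x.take k' := by
      intro k' hk'
      rw [List.take_take, min_eq_left (by omega)]
    rw [hyk] at hklt
    rcases hlt with ⟨k', hk'z, hk'x, hteq', hklt'⟩ | ⟨g1, g2, _⟩ | ⟨g1, g2, _⟩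
    · rcases lt_trichotomy k' k with h | h | h
      · have hzx : z[k']'hk'z = x[k']'hk'x := by
          have h5 : x.take k = z.take k := by rw [← hytk k le_rfl]; exact hteq
          exact getElem_eq_of_take_eq_s5 h5.symm h hk'z hk'x
        rw [hzx] at hklt'
        exact lt_irrefl _ hklt'
      · subst h
        exact lt_asymm hklt hklt'
      · have hzx : z[k]'hkz = x[k]'hkx := getElem_eq_of_take_eq_s5 hteq' h hkz hkx
        rw [hzx] at hklt
        exact lt_irrefl _ hklt
    · -- x.take z.length = z
      have g2' : x.take z.length = z.take z.length := by rw [g2, List.take_length]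
      have hzx : x[k]'hkx = z[k]'hkz := getElem_eq_of_take_eq_s5 g2' hkz hkx hkz
      rw [hzx] at hklt
      exact lt_irrefl _ hklt
    · -- z.take x.length = x
      have g2' : z.take x.length = x.take x.length := by rw [g2, List.take_length]
      have hzx : z[k]'hkz = x[k]'hkx := getElem_eq_of_take_eq_s5 g2' hkx hkz hkx
      rw [← hzx] at hklt
      exact lt_irrefl _ hklt
  · rw [hylen] at h1 h2
    exact ⟨h1.le, by rw [h2]⟩
  · -- z is a proper prefix of x.take (x.length - 1), with non-positive next entry
    exfalso
    rw [hylen] at h1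
    have hzx : z.length < x.length := by omega
    have hyz : (x.take (x.length - 1))[z.length]'(by rw [hylen]; omega) = x[z.length]'hzx :=
      List.getElem_take
    rw [hyz] at h3
    rcases hlt with ⟨k', hk'z, hk'x, hteq', hklt'⟩ | ⟨g1, g2, g3⟩ | ⟨g1, g2, _⟩
    · have h2' : (x.take (x.length-1)).take z.length = z.take z.length := by
        rw [h2, List.take_length]
      have e1 : (x.take (x.length-1))[k']'(by rw [hylen]; omega) = z[k']'hk'z :=
        getElem_eq_of_take_eq_s5 h2' hk'z (by rw [hylen]; omega) hk'z
      have e2 : (x.take (x.length-1))[k']'(by rw [hylen]; omega) = x[k']'hk'x :=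
        List.getElem_take
      have hzk : z[k']'hk'z = x[k']'hk'x := e1.symm.trans e2
      rw [hzk] at hklt'
      exact lt_irrefl _ hklt'
    · exact h3 g3
    · omega

lemma J_mono (δ γ : Ordinal) (A : Set (List SOrd)) (y : List SOrd) :
    Monotone (fun α : Ordinal => A ∩ Jset δ γ (y ++ [SOrd.pos α])) := by
  intro α α' hle z hz
  obtain ⟨hzA, hzL, hge, hlt⟩ := hz
  have htake : ∀ β : Ordinal, (y ++ [SOrd.pos β]).take ((y ++ [SOrd.pos β]).length - 1) = y := by
    intro β
    have : (y ++ [SOrd.pos β]).length - 1 = y.length := by simp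
    rw [this, List.take_left]
  refine ⟨hzA, hzL, ?_, Llt_append_pos_mono hle hlt⟩
  rw [htake α'] ; rw [htake α] at hge; exact hge

lemma Lbelow_mono (δ γ : Ordinal) (A : Set (List SOrd)) :
    Monotone (fun α : Ordinal => A ∩ Lbelow δ γ α) := by
  intro α α' hle z hz
  obtain ⟨hzA, hzL, hlt⟩ := hz
  refine ⟨hzA, hzL, ?_⟩
  have h1 : Llt z ([] ++ [SOrd.pos α]) := by simpa using hlt
  simpa using Llt_append_pos_mono hle h1

/-- If `θ` is an uncountable regular cardinal, `Σ = ⟨S_β : β < θ⟩` a partition of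
`δ*`, and `A ⊆ L^{δ,γ}` has size `< θ`, then the trace `{A ∩ X : X ∈ I^{Σ,γ}}`
has size `< θ`; in particular `I(A) = ⋃_{x∈A} (I^{Σ,γ}_x ↾ A) ∪ {A}` has size `< θ`. -/
theorem trace_small (θ : Cardinal.{0}) (hθ : Cardinal.aleph0 < θ) (hreg : θ.IsRegular)
    (δ γ : Ordinal) (hδ : δ ≠ 0) (hγ : γ ≠ 0)
    (S : Ordinal → Set Ordinal) (hS : IsPartition δ θ.ord S)
    (A : Set (List SOrd)) (hA : A ⊆ Lset δ γ)
    (hcard : Cardinal.mk A < Cardinal.lift.{1} θ) :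
    Cardinal.mk {B : Set (List SOrd) | ∃ X ∈ Ifam δ γ θ.ord S, B = A ∩ X} <
      Cardinal.lift.{1} θ ∧
    Cardinal.mk ({B | ∃ x ∈ A, ∃ X ∈ Ix δ γ θ.ord S x, B = A ∩ X} ∪ {A} :
        Set (Set (List SOrd))) < Cardinal.lift.{1} θ := by
  classical
  have hℵκ : ℵ₀ < Cardinal.lift.{1} θ := Cardinal.aleph0_lt_lift.mpr hθ
  have h1κ : (1 : Cardinal) < Cardinal.lift.{1} θ := lt_trans Cardinal.one_lt_aleph0 hℵκ
  have main : Cardinal.mk {B : Set (List SOrd) | ∃ X ∈ Ifam δ γ θ.ord S, B = A ∩ X} <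
      Cardinal.lift.{1} θ := by
    set G : Set (Set (List SOrd)) := {T | ∃ B, IsBasic δ γ θ.ord S B ∧ T = A ∩ B} with hGdef
    have hGsmall : Cardinal.mk G < Cardinal.lift.{1} θ := by
      rcases Set.eq_empty_or_nonempty A with rfl | hAne
      · have hsub : G ⊆ {∅} := by
          rintro T ⟨B, _, rfl⟩
          simp
        exact lt_of_le_of_lt
          (le_trans (Cardinal.mk_le_mk_of_subset hsub) (le_of_eq (Cardinal.mk_singleton _))) h1κ
      haveI : Nonempty ↥A := hAne.to_subtype
      have hGL : Cardinal.mk ↥(Set.range (fun α : Ordinal => A ∩ Lbelow δ γ α)) <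
          Cardinal.lift.{1} θ :=
        lt_of_le_of_lt
          (range_monotone_le _ (Lbelow_mono δ γ A) A (fun β => Set.inter_subset_left))
          (Cardinal.add_lt_of_lt hℵκ.le hcard h1κ)
      have hGJ : Cardinal.mk ↥(⋃ i : ↥A × ULift.{1} ℕ,
          Set.range (fun α : Ordinal =>
            A ∩ Jset δ γ ((i.1 : List SOrd).take i.2.down ++ [SOrd.pos α]))) <
          Cardinal.lift.{1} θ := by
        have h1 := Cardinal.mk_iUnion_le (fun i : ↥A × ULift.{1} ℕ =>
          Set.range (fun α : Ordinal =>
            A ∩ Jset δ γ ((i.1 : List SOrd).take i.2.down ++ [SOrd.pos α])))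
        have h2 : (⨆ i : ↥A × ULift.{1} ℕ, Cardinal.mk ↥(Set.range (fun α : Ordinal =>
            A ∩ Jset δ γ ((i.1 : List SOrd).take i.2.down ++ [SOrd.pos α])))) ≤
            Cardinal.mk ↥A + 1 :=
          ciSup_le' (fun i => range_monotone_le _ (J_mono δ γ A _) A
            (fun β => Set.inter_subset_left))
        have h3 : Cardinal.mk (↥A × ULift.{1} ℕ) < Cardinal.lift.{1} θ := by
          have he : Cardinal.mk (↥A × ULift.{1} ℕ) = Cardinal.mk ↥A * ℵ₀ := by
            rw [Cardinal.mk_prod, Cardinal.mk_uLift, Cardinal.mk_nat, Cardinal.lift_aleph0,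
              Cardinal.lift_id, Cardinal.lift_id]
          rw [he]
          exact Cardinal.mul_lt_of_lt hℵκ.le hcard hℵκ
        refine lt_of_le_of_lt (le_trans h1 (mul_le_mul' le_rfl h2)) ?_
        exact Cardinal.mul_lt_of_lt hℵκ.le h3 (Cardinal.add_lt_of_lt hℵκ.le hcard h1κ)
      have hGS : Cardinal.mk ↥((fun a : ↥A =>
          (A ∩ ({(a : List SOrd)} : Set (List SOrd)))) '' Set.univ) < Cardinal.lift.{1} θ :=
        lt_of_le_of_lt (le_trans Cardinal.mk_image_le (le_of_eq Cardinal.mk_univ)) hcard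
      have hGsub : G ⊆
          insert (∅ : Set (List SOrd))
            ((Set.range (fun α : Ordinal => A ∩ Lbelow δ γ α) ∪
              ⋃ i : ↥A × ULift.{1} ℕ,
                Set.range (fun α : Ordinal =>
                  A ∩ Jset δ γ ((i.1 : List SOrd).take i.2.down ++ [SOrd.pos α]))) ∪
              (fun a : ↥A => (A ∩ ({(a : List SOrd)} : Set (List SOrd)))) '' Set.univ) := by
        rintro T ⟨B, hB, rfl⟩
        rcases hB with ⟨α, hαγ, rfl⟩ | ⟨x, hxrel, rfl⟩ | ⟨z, hzL, rfl⟩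
        · exact Set.mem_insert_iff.2 (Or.inr (Or.inl (Or.inl ⟨α, rfl⟩)))
        · by_cases hne : (A ∩ Jset δ γ x).Nonempty
          · obtain ⟨z, hzA, hzJ⟩ := hne
            have hx3 : 3 ≤ x.length := hxrel.2.1
            obtain ⟨hlen, htk⟩ := take_eq_of_mem_J (by omega) hzJ
            have hmod : x.length % 2 = 1 := hxrel.2.2.1
            have hpos : SOrd.IsPos (x[x.length - 1]'(by omega)) :=
              (hxrel.2.2.2.1 _ (by omega)).2 (by omega)
            obtain ⟨α, hα⟩ := hpos
            have hxeq : x = z.take (x.length - 1) ++ [SOrd.pos α] := by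
              have h4 := List.take_concat_get (l := x) (i := x.length - 1) (by omega)
              rw [List.concat_eq_append] at h4
              have h5 : x.length - 1 + 1 = x.length := by omega
              rw [h5, List.take_length] at h4
              conv_lhs => rw [← h4]
              rw [← htk, hα]
            refine Set.mem_insert_iff.2 (Or.inr (Or.inl (Or.inr ?_)))
            refine Set.mem_iUnion.2 ⟨(⟨z, hzA⟩, ULift.up (x.length - 1)), ⟨α, ?_⟩⟩
            exact congrArg (fun l => A ∩ Jset δ γ l) hxeq.symm
          · rw [Set.not_nonempty_iff_eq_empty] at hne
            rw [hne]
            exact Set.mem_insert _ _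
        · by_cases hz : z ∈ A
          · exact Set.mem_insert_iff.2 (Or.inr (Or.inr ⟨⟨z, hz⟩, Set.mem_univ _, rfl⟩))
          · have he : A ∩ ({z} : Set (List SOrd)) = ∅ := Set.inter_singleton_eq_empty.2 hz
            rw [he]
            exact Set.mem_insert _ _
      refine lt_of_le_of_lt (Cardinal.mk_le_mk_of_subset hGsub) ?_
      refine lt_of_le_of_lt (Cardinal.mk_insert_le) ?_
      refine Cardinal.add_lt_of_lt hℵκ.le ?_ h1κ
      refine lt_of_le_of_lt (Cardinal.mk_union_le _ _) ?_
      refine Cardinal.add_lt_of_lt hℵκ.le ?_ hGS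
      refine lt_of_le_of_lt (Cardinal.mk_union_le _ _) ?_
      exact Cardinal.add_lt_of_lt hℵκ.le hGL hGJ
    have hTrS : {B : Set (List SOrd) | ∃ X ∈ Ifam δ γ θ.ord S, B = A ∩ X} ⊆
        Set.range (fun E : Finset ↥G => ⋃ T ∈ E, (T : Set (List SOrd))) := by
      rintro B ⟨X, ⟨E₀, hE₀, rfl⟩, rfl⟩
      refine ⟨E₀.attach.image (fun b : {C // C ∈ E₀} =>
        (⟨A ∩ b.1, ⟨b.1, hE₀ b.1 b.2, rfl⟩⟩ : ↥G)), ?_⟩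
      ext w
      simp only [Set.mem_iUnion, Finset.mem_image, Finset.mem_attach, true_and,
        Subtype.exists, Set.mem_inter_iff, Set.mem_setOf_eq, exists_prop]
      constructor
      · rintro ⟨a, haG, ⟨b, hb, heq⟩, hw⟩
        have hab : A ∩ b = a := congrArg Subtype.val heq
        rw [← hab] at hw
        exact ⟨hw.1, b, hb, hw.2⟩
      · rintro ⟨hwA, b, hb, hwb⟩
        exact ⟨A ∩ b, ⟨b, hE₀ b hb, rfl⟩, ⟨b, hb, rfl⟩, hwA, hwb⟩
    refine lt_of_le_of_lt (le_trans (Cardinal.mk_le_mk_of_subset hTrS) Cardinal.mk_range_le) ?_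
    by_cases hfin : Finite ↥G
    · haveI := Fintype.ofFinite ↥G
      exact lt_trans (Cardinal.lt_aleph0_of_finite _) hℵκ
    · haveI := not_finite_iff_infinite.mp hfin
      rw [Cardinal.mk_finset_of_infinite]
      exact hGsmall
  refine ⟨main, ?_⟩
  have hsub2 : ({B | ∃ x ∈ A, ∃ X ∈ Ix δ γ θ.ord S x, B = A ∩ X} ∪ {A} :
      Set (Set (List SOrd))) ⊆
      {B : Set (List SOrd) | ∃ X ∈ Ifam δ γ θ.ord S, B = A ∩ X} ∪ {A} := by
    rintro B (hB | hB)
    · obtain ⟨x, hx, X, ⟨hX1, hX2⟩, rfl⟩ := hB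
      exact Or.inl ⟨X, hX2, rfl⟩
    · exact Or.inr hB
  refine lt_of_le_of_lt (Cardinal.mk_le_mk_of_subset hsub2) ?_
  refine lt_of_le_of_lt (Cardinal.mk_union_le _ _) ?_
  refine Cardinal.add_lt_of_lt hℵκ.le main ?_
  exact lt_of_le_of_lt (le_of_eq (Cardinal.mk_singleton _)) h1κ
end
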